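/- Fix $n > 4$, an integer $k < n$, a configuration $\mathbf{x} \in \mathcal{C}^n$, and sample $k$ coordinates of $\mathbf{x}$ uniformly at random without replacement to form $\mathbf{x}^{(k)}$. Then with probability at least $1 - 1/n^3$, $\sup_I \bigl| |V_I(\mathbf{x}^{(k)})| - \frac{k}{n}|V_I(\mathbf{x})| \bigr| \leq 6\sqrt{n \log n}$, where the supremum is over all closed intervals $I$ of the torus $\mathbb{R}/(2\pi)$ and $V_I(\mathbf{y}) = N_I(\mathbf{y}) - (\text{length}(\mathbf{y}))|I|/(2\pi)$ with $N_I$ the number of points with argument in $I$. -/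

import Mathlib

open Real Finset

/-- Number of points of `x` with index in `S` lying in the closed arc of the
circle starting at angle `a` and of length `ℓ`. -/
noncomputable def NArcS (n : ℕ) (x : Fin n → Circle) (S : Finset (Fin n)) (a ℓ : ℝ) : ℕ :=
  Nat.card {i : Fin n // i ∈ S ∧ ∃ t ∈ Set.Icc (0 : ℝ) ℓ, x i = Circle.exp (a + t)}

/-- Arc discrepancy `V_I = N_I - |S| |I| / (2π)` of the sub-configuration
indexed by `S`, for the arc of initial angle `a` and length `ℓ`. -/
noncomputable def VArcS (n : ℕ) (x : Fin n → Circle) (S : Finset (Fin n)) (a ℓ : ℝ) : ℝ :=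
  (NArcS n x S a ℓ : ℝ) - S.card * ℓ / (2 * π)

set_option maxHeartbeats 1000000

lemma vand {n k m j : ℕ} (hm : m ≤ n) (hj : j ≤ k) :
    m.choose j * (n - m).choose (k - j) ≤ n.choose k := by
  have h := Nat.add_choose_eq m (n - m) k
  rw [Nat.add_sub_cancel' hm] at h
  rw [h]
  have hmem : ((j, k - j) : ℕ × ℕ) ∈ Finset.HasAntidiagonal.antidiagonal k :=
    Finset.HasAntidiagonal.mem_antidiagonal.mpr (by omega)
  exact Finset.single_le_sum (f := fun ij : ℕ × ℕ => m.choose ij.1 * (n - m).choose ij.2)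
    (fun _ _ => Nat.zero_le _) hmem

lemma step_nat (n k m j : ℕ) (hjk : j < k) :
    (j + 1) * ((n - m) - (k - (j + 1))) * (m.choose (j + 1) * (n - m).choose (k - (j + 1)))
      = (m - j) * (k - j) * (m.choose j * (n - m).choose (k - j)) := by
  have h1 := Nat.choose_succ_right_eq m j
  have h2 := Nat.choose_succ_right_eq (n - m) (k - (j + 1))
  have e : k - (j + 1) + 1 = k - j := by omega
  rw [e] at h2
  calc (j + 1) * ((n - m) - (k - (j + 1))) * (m.choose (j + 1) * (n - m).choose (k - (j + 1)))
      = (m.choose (j + 1) * (j + 1)) * ((n - m).choose (k - (j + 1)) * ((n - m) - (k - (j + 1)))) := by ring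
    _ = (m.choose j * (m - j)) * ((n - m).choose (k - j) * (k - j)) := by rw [h1, ← h2]
    _ = (m - j) * (k - j) * (m.choose j * (n - m).choose (k - j)) := by ring


lemma cj_bound (n k m : ℕ) (hn : 0 < n) (hkn : k ≤ n) (hm : m ≤ n) :
    ∀ j, j ≤ k → (k * m / n : ℝ) < j →
    (m.choose j : ℝ) * ((n - m).choose (k - j) : ℝ)
      ≤ (n.choose k : ℝ) *
        Real.exp (-(((j : ℝ) - (k : ℝ) * m / n) * (((j : ℝ) - (k : ℝ) * m / n) - 1)) / (2 * n)) := by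
  have hn' : (0:ℝ) < n := by exact_mod_cast hn
  have hmu0 : (0:ℝ) ≤ (k : ℝ) * m / n := by positivity
  intro j
  induction j with
  | zero =>
    intro _ hlt
    exfalso
    simp only [Nat.cast_zero] at hlt
    linarith
  | succ j ih =>
    intro hjk hlt
    have hjk' : j < k := hjk
    have hkR : (k:ℝ) ≤ n := by exact_mod_cast hkn
    have hmR : (m:ℝ) ≤ n := by exact_mod_cast hm
    have hjR : (j:ℝ) < k := by exact_mod_cast hjk'
    have hj1k : (j:ℝ) + 1 ≤ k := by exact_mod_cast hjk
    by_cases hc : (k : ℝ) * m / n < j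
    · -- inductive step
      have hihb := ih hjk'.le hc
      by_cases hjm : m ≤ j
      · have hz : m.choose (j+1) = 0 := Nat.choose_eq_zero_of_lt (by omega)
        rw [hz]
        simp only [Nat.cast_zero, zero_mul]
        positivity
      · push_neg at hjm
        have hkm : (k:ℝ) * m < j * n := by
          rw [div_lt_iff₀ hn'] at hc; linarith
        have hnm : (k:ℝ) + m < (n:ℝ) + j := by
          nlinarith [mul_nonneg (sub_nonneg.mpr hkR) (sub_nonneg.mpr hmR)]
        have hnmN : k + m ≤ n + j := by exact_mod_cast hnm.le
        have hD : (((n - m) - (k - (j + 1)) : ℕ) : ℝ) = (n:ℝ) - m - (k:ℝ) + j + 1 := by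
          have e : ((n - m) - (k - (j + 1)) : ℕ) = (n + (j + 1)) - (m + k) := by omega
          rw [e, Nat.cast_sub (by omega)]
          push_cast; ring
        have hM : ((m - j : ℕ) : ℝ) = (m:ℝ) - j := by rw [Nat.cast_sub hjm.le]
        have hK : ((k - j : ℕ) : ℝ) = (k:ℝ) - j := by rw [Nat.cast_sub hjk'.le]
        set c1 : ℝ := (m.choose (j+1) : ℝ) * ((n - m).choose (k - (j+1)) : ℝ) with hc1
        set c0 : ℝ := (m.choose j : ℝ) * ((n - m).choose (k - j) : ℝ) with hc0
        have hc0nn : 0 ≤ c0 := by positivity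
        have hc1nn : 0 ≤ c1 := by positivity
        have hstepR : ((j:ℝ) + 1) * ((n:ℝ) - m - k + j + 1) * c1
            = ((m:ℝ) - j) * ((k:ℝ) - j) * c0 := by
          have h := congrArg (fun t : ℕ => (t : ℝ)) (step_nat n k m j hjk')
          simp only [Nat.cast_mul] at h
          rw [hD, hM, hK] at h
          rw [hc1, hc0]
          push_cast at h ⊢
          linarith [h]
        set s : ℝ := (j:ℝ) - (k:ℝ) * m / n with hs
        have hs0 : 0 < s := by rw [hs]; linarith [hc]
        set D : ℝ := ((j:ℝ) + 1) * ((n:ℝ) - m - k + j + 1) with hDdef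
        have hXpos : (1:ℝ) < (n:ℝ) - m - k + j + 1 := by linarith
        have hDpos : 0 < D := by
          apply mul_pos (by positivity); linarith
        have hDn2 : D ≤ (n:ℝ) * n := by
          have h1 : (j:ℝ) + 1 ≤ n := by linarith
          have h2 : (n:ℝ) - m - k + j + 1 ≤ n := by
            have hm0 : (0:ℝ) ≤ m := Nat.cast_nonneg _
            linarith
          exact mul_le_mul h1 h2 (by linarith) (by linarith)
        have hns : (n:ℝ) * s = (j:ℝ) * n - (k:ℝ) * m := by
          rw [hs]; field_simp
        have hkey : ((m:ℝ) - j) * ((k:ℝ) - j) ≤ D - (n:ℝ) * s := by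
          rw [hns, hDdef]
          nlinarith [hnm]
        have hchain : c1 ≤ c0 * (1 - s / n) := by
          have h1 : c1 * D ≤ c0 * (D - (n:ℝ) * s) := by
            calc c1 * D = ((m:ℝ) - j) * ((k:ℝ) - j) * c0 := by
                  linear_combination hstepR
              _ ≤ (D - (n:ℝ) * s) * c0 := mul_le_mul_of_nonneg_right hkey hc0nn
              _ = c0 * (D - (n:ℝ) * s) := by ring
          have hin : s / n * D ≤ (n:ℝ) * s := by
            rw [div_mul_eq_mul_div, div_le_iff₀ hn']
            calc s * D ≤ s * ((n:ℝ) * n) := by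
                  exact mul_le_mul_of_nonneg_left hDn2 hs0.le
              _ = (n:ℝ) * s * n := by ring
          have h2 : c0 * (D - (n:ℝ) * s) ≤ c0 * (1 - s / n) * D := by
            have e : c0 * (1 - s / n) * D = c0 * (D - s / n * D) := by ring
            rw [e]
            apply mul_le_mul_of_nonneg_left _ hc0nn
            linarith
          exact le_of_mul_le_mul_right (le_trans h1 h2) hDpos
        have hexp1 : (1 : ℝ) - s / n ≤ Real.exp (-(s / n)) := by
          have := Real.add_one_le_exp (-(s / n))
          linarith
        have hfin : c1 ≤ (n.choose k : ℝ) * Real.exp (-(s * (s - 1)) / (2 * n)) * Real.exp (-(s / n)) := by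
          calc c1 ≤ c0 * (1 - s / n) := hchain
            _ ≤ c0 * Real.exp (-(s / n)) := mul_le_mul_of_nonneg_left hexp1 hc0nn
            _ ≤ (n.choose k : ℝ) * Real.exp (-(s * (s - 1)) / (2 * n)) * Real.exp (-(s / n)) :=
                mul_le_mul_of_nonneg_right hihb (Real.exp_nonneg _)
        refine le_trans hfin ?_
        rw [mul_assoc, ← Real.exp_add]
        apply le_of_eq
        congr 1
        have hcast : ((j + 1 : ℕ) : ℝ) = (j:ℝ) + 1 := by push_cast; ring
        rw [hcast]
        have e : (j:ℝ) + 1 - (k:ℝ) * m / n = s + 1 := by rw [hs]; ring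
        rw [e]
        field_simp
        ring
    · -- base case: j ≤ mu < j + 1
      push_neg at hc
      have hvand : (m.choose (j+1) : ℝ) * ((n - m).choose (k - (j+1)) : ℝ) ≤ (n.choose k : ℝ) := by
        exact_mod_cast vand hm hjk
      refine le_trans hvand ?_
      nth_rewrite 1 [← mul_one (n.choose k : ℝ)]
      apply mul_le_mul_of_nonneg_left _ (Nat.cast_nonneg _)
      apply Real.one_le_exp
      have hlt' : (k:ℝ) * m / n < (j:ℝ) + 1 := by push_cast at hlt; linarith
      have h2 : 0 < ((j:ℝ) + 1) - (k:ℝ) * m / n := by linarith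
      have h1 : ((j:ℝ) + 1) - (k:ℝ) * m / n ≤ 1 := by linarith
      have hcast : ((j + 1 : ℕ) : ℝ) = (j:ℝ) + 1 := by push_cast; ring
      rw [hcast]
      have hnn : 0 ≤ -((((j:ℝ) + 1) - (k:ℝ) * m / n) * ((((j:ℝ) + 1) - (k:ℝ) * m / n) - 1)) := by
        nlinarith
      positivity

lemma tail_est (n : ℕ) (hn : 4 < n) (mu jr : ℝ)
    (hj : mu + 6 * Real.sqrt (n * Real.log n) < jr) :
    Real.exp (-((jr - mu) * (jr - mu - 1)) / (2 * n)) ≤ 1 / (4 * (n:ℝ)^6) := by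
  have hn5 : (5:ℝ) ≤ n := by exact_mod_cast hn
  have hn0 : (0:ℝ) < n := by linarith
  have hlog4 : Real.log 4 = 2 * Real.log 2 := by
    rw [show (4:ℝ) = 2 ^ 2 by norm_num, Real.log_pow]; push_cast; ring
  have h2 : (0.6931471803 : ℝ) < Real.log 2 := Real.log_two_gt_d9
  have hlog41 : (1:ℝ) ≤ Real.log 4 := by rw [hlog4]; linarith
  have hL4 : Real.log 4 ≤ Real.log n := Real.log_le_log (by norm_num) (by linarith)
  set L : ℝ := Real.log n with hLdef
  have hL1 : (1:ℝ) ≤ L := le_trans hlog41 hL4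
  have hnL : (1:ℝ) ≤ (n:ℝ) * L := by nlinarith
  set q : ℝ := Real.sqrt ((n:ℝ) * L) with hqdef
  have hq0 : 0 ≤ q := Real.sqrt_nonneg _
  have hq2 : q ^ 2 = (n:ℝ) * L := Real.sq_sqrt (by linarith)
  have hq1 : (1:ℝ) ≤ q := by
    rw [hqdef]; rw [show (1:ℝ) = Real.sqrt 1 by simp]
    exact Real.sqrt_le_sqrt (by linarith)
  set s : ℝ := jr - mu with hsdef
  have hs6 : 6 * q < s := by rw [hsdef]; push_cast at hj ⊢; linarith [hj]
  have hkey : 2 * (n:ℝ) * (Real.log 4 + 6 * L) ≤ s * (s - 1) := by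
    have h30 : 30 * ((n:ℝ) * L) ≤ s * (s - 1) := by nlinarith
    have h14 : 2 * (n:ℝ) * (Real.log 4 + 6 * L) ≤ 14 * ((n:ℝ) * L) := by nlinarith
    linarith
  have hstep : Real.exp (-(s * (s - 1)) / (2 * n)) ≤ Real.exp (-(Real.log 4 + 6 * L)) := by
    apply Real.exp_le_exp.mpr
    rw [div_le_iff₀ (by positivity)]
    nlinarith
  refine le_trans hstep ?_
  have he : Real.log 4 + 6 * L = Real.log (4 * (n:ℝ)^6) := by
    rw [Real.log_mul (by norm_num) (by positivity), Real.log_pow]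
    push_cast; ring
  rw [he, Real.exp_neg, Real.exp_log (by positivity)]
  rw [one_div]

attribute [local instance] Classical.propDecidable

lemma fiber_le {n k j : ℕ} (B : Finset (Fin n)) (s : Finset (Finset (Fin n)))
    (hs : ∀ S ∈ s, S.card = k ∧ (S ∩ B).card = j) :
    s.card ≤ B.card.choose j * (n - B.card).choose (k - j) := by
  have hmain : s.card ≤ ((B.powersetCard j) ×ˢ (Bᶜ.powersetCard (k - j))).card := by
    apply Finset.card_le_card_of_injOn (fun S => (S ∩ B, S \ B))
    · intro S hS
      obtain ⟨hSk, hSj⟩ := hs S hS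
      simp only [Finset.mem_coe, Finset.mem_product, Finset.mem_powersetCard]
      have hsd := Finset.card_inter_add_card_sdiff S B
      refine ⟨⟨Finset.inter_subset_right, hSj⟩, ?_, by omega⟩
      intro i hi
      rw [Finset.mem_compl]
      exact (Finset.mem_sdiff.mp hi).2
    · intro S hS S' hS' h
      have e1 : S ∩ B = S' ∩ B := congrArg Prod.fst h
      have e2 : S \ B = S' \ B := congrArg Prod.snd h
      have u1 := sup_inf_sdiff S B
      have u2 := sup_inf_sdiff S' B
      rw [← u1, ← u2]
      change S ∩ B ∪ S \ B = S' ∩ B ∪ S' \ B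
      rw [e1, e2]
  rw [Finset.card_product, Finset.card_powersetCard, Finset.card_powersetCard,
    Finset.card_compl, Fintype.card_fin] at hmain
  exact hmain

lemma upper_tail (n k : ℕ) (hn : 4 < n) (hkn : k < n) (B : Finset (Fin n)) :
    ((Finset.univ.filter (fun S : Finset (Fin n) => S.card = k ∧
        (k:ℝ) * B.card / n + 6 * Real.sqrt ((n:ℝ) * Real.log n) < ((S ∩ B).card : ℝ))).card : ℝ)
      ≤ (n.choose k : ℝ) / (4 * (n:ℝ)^5) := by
  have hn0 : (0:ℝ) < n := by
    have : (4:ℝ) < n := by exact_mod_cast hn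
    linarith
  have hmn : B.card ≤ n := by
    have := Finset.card_le_univ B
    simpa using this
  set m : ℕ := B.card with hmdef
  set t : Finset (Finset (Fin n)) := Finset.univ.filter (fun S : Finset (Fin n) => S.card = k ∧
        (k:ℝ) * B.card / n + 6 * Real.sqrt ((n:ℝ) * Real.log n) < ((S ∩ B).card : ℝ)) with htdef
  have hfib : ∀ S ∈ t, (S ∩ B).card ∈ Finset.range (k + 1) := by
    intro S hS
    rw [htdef, Finset.mem_filter] at hS
    rw [Finset.mem_range]
    have h1 : (S ∩ B).card ≤ S.card := Finset.card_le_card Finset.inter_subset_left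
    omega
  have hcard := Finset.card_eq_sum_card_fiberwise hfib
  have hbound : ∀ j ∈ Finset.range (k + 1),
      ((t.filter (fun S => (S ∩ B).card = j)).card : ℝ) ≤ (n.choose k : ℝ) / (4 * (n:ℝ)^6) := by
    intro j hj
    rcases Finset.eq_empty_or_nonempty (t.filter (fun S => (S ∩ B).card = j)) with he | hne
    · rw [he]
      simp only [Finset.card_empty, Nat.cast_zero]
      positivity
    · obtain ⟨S₀, hS₀⟩ := hne
      rw [Finset.mem_filter] at hS₀
      obtain ⟨hS₀t, hS₀j⟩ := hS₀
      rw [htdef, Finset.mem_filter] at hS₀t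
      obtain ⟨-, hS₀k, hS₀lt⟩ := hS₀t
      rw [hS₀j] at hS₀lt
      -- hS₀lt : mu + T < j
      have hjk : j ≤ k := by
        rw [← hS₀k, ← hS₀j]
        exact Finset.card_le_card Finset.inter_subset_left
      have hmuj : ((k:ℝ) * m / n) < j := by
        have hT : 0 ≤ 6 * Real.sqrt ((n:ℝ) * Real.log n) := by positivity
        rw [hmdef]; linarith
      have h1 : (t.filter (fun S => (S ∩ B).card = j)).card
          ≤ m.choose j * (n - m).choose (k - j) := by
        apply fiber_le B
        intro S hS
        rw [Finset.mem_filter] at hS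
        obtain ⟨hSt, hSj⟩ := hS
        rw [htdef, Finset.mem_filter] at hSt
        exact ⟨hSt.2.1, hSj⟩
      have h2 : ((m.choose j * (n - m).choose (k - j) : ℕ) : ℝ)
          ≤ (n.choose k : ℝ) * Real.exp (-(((j : ℝ) - (k : ℝ) * m / n) *
              (((j : ℝ) - (k : ℝ) * m / n) - 1)) / (2 * n)) := by
        push_cast
        exact cj_bound n k m (by omega) hkn.le hmn j hjk hmuj
      have h3 : Real.exp (-(((j : ℝ) - (k : ℝ) * m / n) *
              (((j : ℝ) - (k : ℝ) * m / n) - 1)) / (2 * n)) ≤ 1 / (4 * (n:ℝ)^6) := by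
        apply tail_est n hn ((k:ℝ) * m / n) (j : ℝ)
        rw [hmdef]
        exact hS₀lt
      calc ((t.filter (fun S => (S ∩ B).card = j)).card : ℝ)
          ≤ ((m.choose j * (n - m).choose (k - j) : ℕ) : ℝ) := by exact_mod_cast h1
        _ ≤ (n.choose k : ℝ) * Real.exp (-(((j : ℝ) - (k : ℝ) * m / n) *
              (((j : ℝ) - (k : ℝ) * m / n) - 1)) / (2 * n)) := h2
        _ ≤ (n.choose k : ℝ) * (1 / (4 * (n:ℝ)^6)) :=
            mul_le_mul_of_nonneg_left h3 (Nat.cast_nonneg _)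
        _ = (n.choose k : ℝ) / (4 * (n:ℝ)^6) := by ring
  calc ((t.card : ℕ) : ℝ) = ((∑ j ∈ Finset.range (k + 1),
          (t.filter (fun S => (S ∩ B).card = j)).card : ℕ) : ℝ) := by rw [← hcard]
    _ = ∑ j ∈ Finset.range (k + 1), ((t.filter (fun S => (S ∩ B).card = j)).card : ℝ) := by
          push_cast; ring
    _ ≤ ∑ j ∈ Finset.range (k + 1), (n.choose k : ℝ) / (4 * (n:ℝ)^6) :=
          Finset.sum_le_sum hbound
    _ = (k + 1 : ℝ) * ((n.choose k : ℝ) / (4 * (n:ℝ)^6)) := by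
          rw [Finset.sum_const, Finset.card_range]; push_cast; ring
    _ ≤ (n : ℝ) * ((n.choose k : ℝ) / (4 * (n:ℝ)^6)) := by
          apply mul_le_mul_of_nonneg_right _ (by positivity)
          have : (k:ℝ) + 1 ≤ n := by exact_mod_cast hkn
          linarith
    _ = (n.choose k : ℝ) / (4 * (n:ℝ)^5) := by
          field_simp

lemma mem_arc_iff {y : Circle} {θ a ℓ : ℝ} (hy : y = Circle.exp θ)
    (hℓ0 : 0 ≤ ℓ) (hℓ2 : ℓ ≤ 2 * π) :
    (∃ t ∈ Set.Icc (0:ℝ) ℓ, y = Circle.exp (a + t)) ↔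
      toIcoMod Real.two_pi_pos 0 (θ - a) ≤ ℓ := by
  set r : ℝ := toIcoMod Real.two_pi_pos 0 (θ - a) with hrdef
  have hr := toIcoMod_mem_Ico' Real.two_pi_pos (θ - a)
  obtain ⟨hr0, hr2⟩ := hr
  have hrz : ∃ z : ℤ, θ - a = r + z • (2 * π) :=
    ((toIcoMod_eq_iff Real.two_pi_pos).mp rfl).2
  obtain ⟨z, hz⟩ := hrz
  rw [zsmul_eq_mul] at hz
  constructor
  · rintro ⟨t, ⟨ht0, htℓ⟩, hxt⟩
    rw [hy] at hxt
    obtain ⟨w, hw⟩ := Circle.exp_eq_exp.mp hxt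
    -- θ = a + t + w * (2π)
    have htr : t - r = ((z : ℝ) - w) * (2 * π) := by
      have : θ - a = t + w * (2 * π) := by linarith [hw]
      rw [this] at hz
      ring_nf
      ring_nf at hz
      linarith
    have hpi := Real.pi_pos
    have hzw0 : (0:ℤ) ≤ z - w := by
      by_contra hcon
      push_neg at hcon
      have h1 : z - w ≤ -1 := by omega
      have : ((z - w : ℤ) : ℝ) ≤ -1 := by exact_mod_cast h1
      have : (z:ℝ) - w ≤ -1 := by push_cast at this; linarith
      nlinarith
    have hzw1 : (z - w : ℤ) ≤ 1 := by
      by_contra hcon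
      push_neg at hcon
      have : (2:ℝ) ≤ ((z - w : ℤ) : ℝ) := by exact_mod_cast hcon
      have : (2:ℝ) ≤ (z:ℝ) - w := by push_cast at this; linarith
      nlinarith
    interval_cases h : (z - w : ℤ)
    · have : (z:ℝ) - w = 0 := by exact_mod_cast h
      rw [this] at htr
      have : t = r := by linarith
      linarith
    · have : (z:ℝ) - w = 1 := by exact_mod_cast h
      rw [this] at htr
      -- t = r + 2π, t ≤ ℓ ≤ 2π, r ≥ 0 ⟹ r ≤ 0 so r = 0
      have : r ≤ 0 := by linarith
      linarith
  · intro hrl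
    refine ⟨r, ⟨hr0, hrl⟩, ?_⟩
    rw [hy]
    apply Circle.exp_eq_exp.mpr
    exact ⟨z, by linarith⟩

lemma narc_card (n : ℕ) (x : Fin n → Circle) (θ : Fin n → ℝ)
    (hθ : ∀ i, x i = Circle.exp (θ i))
    (S : Finset (Fin n)) (a ℓ : ℝ) (hℓ0 : 0 ≤ ℓ) (hℓ2 : ℓ ≤ 2 * π) :
    NArcS n x S a ℓ = (S.filter (fun i => toIcoMod Real.two_pi_pos 0 (θ i - a) ≤ ℓ)).card := by
  rw [NArcS, Nat.card_eq_fintype_card, Fintype.card_subtype]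
  congr 1
  ext i
  simp only [Finset.mem_filter, Finset.mem_univ, true_and]
  constructor
  · rintro ⟨hiS, hex⟩
    exact ⟨hiS, (mem_arc_iff (hθ i) hℓ0 hℓ2).mp hex⟩
  · rintro ⟨hiS, hle⟩
    exact ⟨hiS, (mem_arc_iff (hθ i) hℓ0 hℓ2).mpr hle⟩

lemma bad_pair_le (n k : ℕ) (hn : 4 < n) (hkn : k < n) (B : Finset (Fin n)) :
    ((Finset.univ.filter (fun S : Finset (Fin n) => S.card = k ∧
        6 * Real.sqrt ((n:ℝ) * Real.log n) <
          |((S ∩ B).card : ℝ) - (k:ℝ) * B.card / n|)).card : ℝ)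
      ≤ (n.choose k : ℝ) / (2 * (n:ℝ)^5) := by
  have hn0N : 0 < n := by omega
  have hn0 : (0:ℝ) < n := by exact_mod_cast hn0N
  have hmn : B.card ≤ n := by simpa using Finset.card_le_univ B
  have hcompl : (Bᶜ : Finset (Fin n)).card = n - B.card := by
    rw [Finset.card_compl, Fintype.card_fin]
  have hcomplR : ((Bᶜ : Finset (Fin n)).card : ℝ) = (n:ℝ) - B.card := by
    rw [hcompl, Nat.cast_sub hmn]
  set T : ℝ := 6 * Real.sqrt ((n:ℝ) * Real.log n) with hT
  have hsub : (Finset.univ.filter (fun S : Finset (Fin n) => S.card = k ∧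
          T < |((S ∩ B).card : ℝ) - (k:ℝ) * B.card / n|))
      ⊆ (Finset.univ.filter (fun S : Finset (Fin n) => S.card = k ∧
          (k:ℝ) * B.card / n + T < ((S ∩ B).card : ℝ)))
        ∪ (Finset.univ.filter (fun S : Finset (Fin n) => S.card = k ∧
          (k:ℝ) * (Bᶜ : Finset (Fin n)).card / n + T < ((S ∩ Bᶜ).card : ℝ))) := by
    intro S hS
    rw [Finset.mem_filter] at hS
    obtain ⟨-, hSk, habs⟩ := hS
    rw [Finset.mem_union, Finset.mem_filter, Finset.mem_filter]
    rcases lt_abs.mp habs with h | h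
    · exact Or.inl ⟨Finset.mem_univ _, hSk, by linarith⟩
    · right
      refine ⟨Finset.mem_univ _, hSk, ?_⟩
      have hsd : S ∩ Bᶜ = S \ B := by
        ext i
        simp [Finset.mem_sdiff, Finset.mem_compl, Finset.mem_inter]
      have hcards : (S ∩ B).card + (S \ B).card = k := by
        rw [Finset.card_inter_add_card_sdiff, hSk]
      have hcardsR : ((S ∩ Bᶜ).card : ℝ) = (k:ℝ) - ((S ∩ B).card : ℝ) := by
        rw [hsd]
        have : ((S \ B).card : ℕ) = k - (S ∩ B).card := by omega
        rw [this, Nat.cast_sub (by omega)]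
      rw [hcardsR, hcomplR]
      have hexp : (k:ℝ) * ((n:ℝ) - B.card) / n = (k:ℝ) - (k:ℝ) * B.card / n := by
        field_simp
      rw [hexp]
      linarith
  have hc := Finset.card_le_card hsub
  have hcu := Finset.card_union_le
    (Finset.univ.filter (fun S : Finset (Fin n) => S.card = k ∧
          (k:ℝ) * B.card / n + T < ((S ∩ B).card : ℝ)))
    (Finset.univ.filter (fun S : Finset (Fin n) => S.card = k ∧
          (k:ℝ) * (Bᶜ : Finset (Fin n)).card / n + T < ((S ∩ Bᶜ).card : ℝ)))
  have hu1 := upper_tail n k hn hkn B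
  have hu2 := upper_tail n k hn hkn Bᶜ
  rw [← hT] at hu1 hu2
  have hfin : ((Finset.univ.filter (fun S : Finset (Fin n) => S.card = k ∧
        T < |((S ∩ B).card : ℝ) - (k:ℝ) * B.card / n|)).card : ℝ)
      ≤ (n.choose k : ℝ) / (4 * (n:ℝ)^5) + (n.choose k : ℝ) / (4 * (n:ℝ)^5) := by
    have : ((Finset.univ.filter (fun S : Finset (Fin n) => S.card = k ∧
        T < |((S ∩ B).card : ℝ) - (k:ℝ) * B.card / n|)).card : ℝ)
        ≤ (((Finset.univ.filter (fun S : Finset (Fin n) => S.card = k ∧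
          (k:ℝ) * B.card / n + T < ((S ∩ B).card : ℝ))).card : ℝ)
          + ((Finset.univ.filter (fun S : Finset (Fin n) => S.card = k ∧
          (k:ℝ) * (Bᶜ : Finset (Fin n)).card / n + T < ((S ∩ Bᶜ).card : ℝ))).card : ℝ)) := by
      exact_mod_cast le_trans hc hcu
    exact le_trans this (by linarith)
  refine le_trans hfin (le_of_eq ?_)
  field_simp
  ring

lemma toIco_diff (u v : ℝ)
    (h : toIcoMod Real.two_pi_pos 0 v ≤ toIcoMod Real.two_pi_pos 0 u) :
    toIcoMod Real.two_pi_pos 0 (u - v)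
      = toIcoMod Real.two_pi_pos 0 u - toIcoMod Real.two_pi_pos 0 v := by
  obtain ⟨hu0, hu2⟩ := toIcoMod_mem_Ico' Real.two_pi_pos u
  obtain ⟨hv0, hv2⟩ := toIcoMod_mem_Ico' Real.two_pi_pos v
  obtain ⟨zu, hzu⟩ := ((toIcoMod_eq_iff Real.two_pi_pos).mp
    (rfl : toIcoMod Real.two_pi_pos 0 u = toIcoMod Real.two_pi_pos 0 u)).2
  obtain ⟨zv, hzv⟩ := ((toIcoMod_eq_iff Real.two_pi_pos).mp
    (rfl : toIcoMod Real.two_pi_pos 0 v = toIcoMod Real.two_pi_pos 0 v)).2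
  apply (toIcoMod_eq_iff Real.two_pi_pos).mpr
  rw [zsmul_eq_mul] at hzu hzv
  constructor
  · constructor
    · linarith
    · rw [zero_add]; linarith
  · refine ⟨zu - zv, ?_⟩
    rw [zsmul_eq_mul]
    push_cast
    linarith

lemma toIco_diff_lt (u v : ℝ)
    (h : toIcoMod Real.two_pi_pos 0 u < toIcoMod Real.two_pi_pos 0 v) :
    toIcoMod Real.two_pi_pos 0 (u - v)
      = toIcoMod Real.two_pi_pos 0 u - toIcoMod Real.two_pi_pos 0 v + 2 * π := by
  obtain ⟨hu0, hu2⟩ := toIcoMod_mem_Ico' Real.two_pi_pos u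
  obtain ⟨hv0, hv2⟩ := toIcoMod_mem_Ico' Real.two_pi_pos v
  obtain ⟨zu, hzu⟩ := ((toIcoMod_eq_iff Real.two_pi_pos).mp
    (rfl : toIcoMod Real.two_pi_pos 0 u = toIcoMod Real.two_pi_pos 0 u)).2
  obtain ⟨zv, hzv⟩ := ((toIcoMod_eq_iff Real.two_pi_pos).mp
    (rfl : toIcoMod Real.two_pi_pos 0 v = toIcoMod Real.two_pi_pos 0 v)).2
  apply (toIcoMod_eq_iff Real.two_pi_pos).mpr
  rw [zsmul_eq_mul] at hzu hzv
  constructor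
  · constructor
    · linarith
    · rw [zero_add]; linarith
  · refine ⟨zu - zv - 1, ?_⟩
    rw [zsmul_eq_mul]
    push_cast
    linarith

/-- Uniform concentration of the arc discrepancies under sampling without
replacement (Lemma B.7 of the paper): for a uniformly random subset `S` of
size `k`, with probability at least `1 - 1/n³`, simultaneously over all arcs,
`| |V_I(x_S)| - (k/n) |V_I(x)| | ≤ 6 √(n log n)`.  The probability statement
is expressed by counting the favourable `k`-subsets among the `n.choose k`
possible ones. -/
theorem stmt18 (n k : ℕ) (hn : 4 < n) (hk : k < n) (x : Fin n → Circle) :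
    (1 - 1 / (n : ℝ) ^ 3) * (n.choose k) ≤
      Nat.card {S : Finset (Fin n) // S.card = k ∧
        ∀ a : ℝ, ∀ ℓ ∈ Set.Icc (0 : ℝ) (2 * π),
          |(|VArcS n x S a ℓ| - (k : ℝ) / n * |VArcS n x Finset.univ a ℓ|)|
            ≤ 6 * Real.sqrt (n * Real.log n) } := by
  have hn0N : 0 < n := by omega
  have hn0 : (0:ℝ) < n := by exact_mod_cast hn0N
  set T : ℝ := 6 * Real.sqrt ((n:ℝ) * Real.log n) with hT
  have hT0 : 0 ≤ T := by positivity
  set θ : Fin n → ℝ := fun i => Complex.arg (x i : ℂ) with hθdef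
  have hθ : ∀ i, x i = Circle.exp (θ i) := fun i => (Circle.exp_arg (x i)).symm
  set r : ℝ → Fin n → ℝ := fun a i => toIcoMod Real.two_pi_pos 0 (θ i - a) with hrdef
  set B : Fin n → Fin n → Finset (Fin n) := fun j l =>
    Finset.univ.filter (fun i => toIcoMod Real.two_pi_pos 0 (θ i - θ j)
      ≤ toIcoMod Real.two_pi_pos 0 (θ l - θ j)) with hBdef
  set G : Finset (Fin n) → Prop := fun S => ∀ j l : Fin n,
    |((S ∩ B j l).card : ℝ) - (k:ℝ) * (B j l).card / n| ≤ T with hGdef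
  -- geometric reduction
  have hgeo : ∀ S : Finset (Fin n), S.card = k → G S →
      ∀ a : ℝ, ∀ ℓ ∈ Set.Icc (0 : ℝ) (2 * π),
        |(|VArcS n x S a ℓ| - (k : ℝ) / n * |VArcS n x Finset.univ a ℓ|)| ≤ T := by
    intro S hSk hG a ℓ hℓ
    obtain ⟨hℓ0, hℓ2⟩ := hℓ
    have hNS := narc_card n x θ hθ S a ℓ hℓ0 hℓ2
    have hNU := narc_card n x θ hθ Finset.univ a ℓ hℓ0 hℓ2
    set NS : ℝ := ((S.filter (fun i => toIcoMod Real.two_pi_pos 0 (θ i - a) ≤ ℓ)).card : ℝ) with hNSdef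
    set NU : ℝ := ((Finset.univ.filter
      (fun i : Fin n => toIcoMod Real.two_pi_pos 0 (θ i - a) ≤ ℓ)).card : ℝ) with hNUdef
    have key : |(|VArcS n x S a ℓ| - (k : ℝ) / n * |VArcS n x Finset.univ a ℓ|)|
        ≤ |NS - (k:ℝ)/n * NU| := by
      have e1 : VArcS n x S a ℓ = NS - (k:ℝ) * ℓ / (2 * π) := by
        rw [VArcS, hNS, hSk]
      have e2 : VArcS n x Finset.univ a ℓ = NU - (n:ℝ) * ℓ / (2 * π) := by
        rw [VArcS, hNU]
        simp [Finset.card_univ]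
        rw [hNUdef]
      have e3 : VArcS n x S a ℓ - (k:ℝ)/n * VArcS n x Finset.univ a ℓ = NS - (k:ℝ)/n * NU := by
        rw [e1, e2]
        have hpi := Real.pi_pos
        field_simp
        ring
      calc |(|VArcS n x S a ℓ| - (k : ℝ) / n * |VArcS n x Finset.univ a ℓ|)|
          = |(|VArcS n x S a ℓ| - |(k : ℝ) / n * VArcS n x Finset.univ a ℓ|)| := by
            rw [abs_mul, abs_of_nonneg (by positivity : (0:ℝ) ≤ (k:ℝ)/n)]
        _ ≤ |VArcS n x S a ℓ - (k : ℝ) / n * VArcS n x Finset.univ a ℓ| :=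
            abs_abs_sub_abs_le_abs_sub _ _
        _ = |NS - (k:ℝ)/n * NU| := by rw [e3]
    refine le_trans key ?_
    rcases Finset.eq_empty_or_nonempty (Finset.univ.filter
        (fun i : Fin n => toIcoMod Real.two_pi_pos 0 (θ i - a) ≤ ℓ)) with hA | hA
    · have hSempty : S.filter (fun i => toIcoMod Real.two_pi_pos 0 (θ i - a) ≤ ℓ) = ∅ :=
        Finset.subset_empty.mp (hA ▸ Finset.filter_subset_filter _ (Finset.subset_univ S))
      rw [hNSdef, hNUdef, hSempty, hA]
      simp only [Finset.card_empty, Nat.cast_zero]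
      simpa using hT0
    · obtain ⟨j, hjA, hjmin⟩ := Finset.exists_min_image _
        (fun i => toIcoMod Real.two_pi_pos 0 (θ i - a)) hA
      obtain ⟨l, hlA, hlmax⟩ := Finset.exists_max_image _
        (fun i => toIcoMod Real.two_pi_pos 0 (θ i - a)) hA
      have hjℓ : toIcoMod Real.two_pi_pos 0 (θ j - a) ≤ ℓ := (Finset.mem_filter.mp hjA).2
      have hlℓ : toIcoMod Real.two_pi_pos 0 (θ l - a) ≤ ℓ := (Finset.mem_filter.mp hlA).2
      have hd : toIcoMod Real.two_pi_pos 0 (θ l - θ j)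
          = toIcoMod Real.two_pi_pos 0 (θ l - a) - toIcoMod Real.two_pi_pos 0 (θ j - a) := by
        have h := toIco_diff (θ l - a) (θ j - a) (hjmin l hlA)
        rw [show θ l - a - (θ j - a) = θ l - θ j by ring] at h
        exact h
      have hiff : ∀ i, (toIcoMod Real.two_pi_pos 0 (θ i - a) ≤ ℓ) ↔
          (toIcoMod Real.two_pi_pos 0 (θ i - θ j) ≤ toIcoMod Real.two_pi_pos 0 (θ l - θ j)) := by
        intro i
        obtain ⟨hi0, hi2⟩ := toIcoMod_mem_Ico' Real.two_pi_pos (θ i - a)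
        obtain ⟨hl0, hl2⟩ := toIcoMod_mem_Ico' Real.two_pi_pos (θ l - a)
        constructor
        · intro hi
          have hiA : i ∈ Finset.univ.filter
              (fun i : Fin n => toIcoMod Real.two_pi_pos 0 (θ i - a) ≤ ℓ) :=
            Finset.mem_filter.mpr ⟨Finset.mem_univ _, hi⟩
          have h1 := hjmin i hiA
          have h2 := hlmax i hiA
          have h := toIco_diff (θ i - a) (θ j - a) h1
          rw [show θ i - a - (θ j - a) = θ i - θ j by ring] at h
          rw [h, hd]
          linarith
        · intro hi
          rcases le_or_gt (toIcoMod Real.two_pi_pos 0 (θ j - a))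
              (toIcoMod Real.two_pi_pos 0 (θ i - a)) with h1 | h1
          · have h := toIco_diff (θ i - a) (θ j - a) h1
            rw [show θ i - a - (θ j - a) = θ i - θ j by ring] at h
            rw [h, hd] at hi
            linarith
          · have h := toIco_diff_lt (θ i - a) (θ j - a) h1
            rw [show θ i - a - (θ j - a) = θ i - θ j by ring] at h
            rw [h, hd] at hi
            linarith
      have eS : S.filter (fun i => toIcoMod Real.two_pi_pos 0 (θ i - a) ≤ ℓ) = S ∩ B j l := by
        ext i
        simp only [Finset.mem_filter, Finset.mem_inter, hBdef, Finset.mem_univ, true_and]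
        try rw [hiff i]
        try tauto
      have eU : Finset.univ.filter
          (fun i : Fin n => toIcoMod Real.two_pi_pos 0 (θ i - a) ≤ ℓ) = B j l := by
        ext i
        simp only [Finset.mem_filter, hBdef, Finset.mem_univ, true_and]
        exact hiff i
      rw [hNSdef, hNUdef, eS, eU]
      have hGjl := hG j l
      have e : ((S ∩ B j l).card : ℝ) - (k:ℝ)/n * ((B j l).card : ℝ)
          = ((S ∩ B j l).card : ℝ) - (k:ℝ) * ((B j l).card : ℝ) / n := by ring
      rw [e]
      exact hGjl
  -- counting
  set badP : Fin n → Fin n → Finset (Finset (Fin n)) := fun j l =>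
    Finset.univ.filter (fun S : Finset (Fin n) => S.card = k ∧
      T < |((S ∩ B j l).card : ℝ) - (k:ℝ) * (B j l).card / n|) with hbadPdef
  set bad : Finset (Finset (Fin n)) :=
    Finset.univ.filter (fun S : Finset (Fin n) => S.card = k ∧ ¬ G S) with hbaddef
  set good : Finset (Finset (Fin n)) :=
    Finset.univ.filter (fun S : Finset (Fin n) => S.card = k ∧ G S) with hgooddef
  have hbadsub : bad ⊆ (Finset.univ : Finset (Fin n × Fin n)).biUnion
      (fun p => badP p.1 p.2) := by
    intro S hS
    rw [hbaddef, Finset.mem_filter] at hS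
    obtain ⟨-, hSk, hnG⟩ := hS
    rw [hGdef] at hnG
    simp only [not_forall, not_le] at hnG
    obtain ⟨j, l, hjl⟩ := hnG
    exact Finset.mem_biUnion.mpr ⟨(j, l), Finset.mem_univ _,
      Finset.mem_filter.mpr ⟨Finset.mem_univ _, hSk, hjl⟩⟩
  have hbadcard : (bad.card : ℝ) ≤ (n.choose k : ℝ) / (2 * (n:ℝ)^3) := by
    have h1 : bad.card ≤ ∑ p ∈ (Finset.univ : Finset (Fin n × Fin n)), (badP p.1 p.2).card :=
      le_trans (Finset.card_le_card hbadsub) (Finset.card_biUnion_le)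
    have h2 : (bad.card : ℝ) ≤ ∑ p ∈ (Finset.univ : Finset (Fin n × Fin n)),
        ((badP p.1 p.2).card : ℝ) := by exact_mod_cast h1
    have h3 : ∀ p ∈ (Finset.univ : Finset (Fin n × Fin n)),
        ((badP p.1 p.2).card : ℝ) ≤ (n.choose k : ℝ) / (2 * (n:ℝ)^5) := by
      intro p _
      exact bad_pair_le n k hn hk (B p.1 p.2)
    have h4 := Finset.sum_le_sum h3
    have h5 : ∑ _p ∈ (Finset.univ : Finset (Fin n × Fin n)),
        (n.choose k : ℝ) / (2 * (n:ℝ)^5) = (n:ℝ)^2 * ((n.choose k : ℝ) / (2 * (n:ℝ)^5)) := by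
      rw [Finset.sum_const, Finset.card_univ, Fintype.card_prod, Fintype.card_fin]
      push_cast
      ring
    have h6 : (n:ℝ)^2 * ((n.choose k : ℝ) / (2 * (n:ℝ)^5)) = (n.choose k : ℝ) / (2 * (n:ℝ)^3) := by
      field_simp
    calc (bad.card : ℝ) ≤ _ := h2
      _ ≤ _ := h4
      _ = _ := h5.trans h6
  have htotal : (Finset.univ.filter (fun S : Finset (Fin n) => S.card = k)).card = n.choose k := by
    have he : Finset.univ.filter (fun S : Finset (Fin n) => S.card = k)
        = Finset.powersetCard k Finset.univ := by
      ext S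
      simp [Finset.mem_powersetCard, Finset.subset_univ]
    rw [he, Finset.card_powersetCard, Finset.card_univ, Fintype.card_fin]
  have hsplit : (Finset.univ.filter (fun S : Finset (Fin n) => S.card = k)) ⊆ good ∪ bad := by
    intro S hS
    rw [Finset.mem_filter] at hS
    rw [Finset.mem_union, hgooddef, hbaddef, Finset.mem_filter, Finset.mem_filter]
    by_cases hGS : G S
    · exact Or.inl ⟨Finset.mem_univ _, hS.2, hGS⟩
    · exact Or.inr ⟨Finset.mem_univ _, hS.2, hGS⟩
  have hcount : n.choose k ≤ good.card + bad.card := by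
    rw [← htotal]
    exact le_trans (Finset.card_le_card hsplit) (Finset.card_union_le _ _)
  -- relate Nat.card to good
  have hgoodsub : good ⊆ Finset.univ.filter (fun S : Finset (Fin n) => S.card = k ∧
      ∀ a : ℝ, ∀ ℓ ∈ Set.Icc (0 : ℝ) (2 * π),
        |(|VArcS n x S a ℓ| - (k : ℝ) / n * |VArcS n x Finset.univ a ℓ|)| ≤ T) := by
    intro S hS
    rw [hgooddef, Finset.mem_filter] at hS
    obtain ⟨-, hSk, hGS⟩ := hS
    exact Finset.mem_filter.mpr ⟨Finset.mem_univ _, hSk, hgeo S hSk hGS⟩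
  have hnatcard : Nat.card {S : Finset (Fin n) // S.card = k ∧
      ∀ a : ℝ, ∀ ℓ ∈ Set.Icc (0 : ℝ) (2 * π),
        |(|VArcS n x S a ℓ| - (k : ℝ) / n * |VArcS n x Finset.univ a ℓ|)| ≤ T}
      = (Finset.univ.filter (fun S : Finset (Fin n) => S.card = k ∧
      ∀ a : ℝ, ∀ ℓ ∈ Set.Icc (0 : ℝ) (2 * π),
        |(|VArcS n x S a ℓ| - (k : ℝ) / n * |VArcS n x Finset.univ a ℓ|)| ≤ T)).card := by
    rw [Nat.card_eq_fintype_card, Fintype.card_subtype]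
  rw [hT] at hnatcard
  rw [hnatcard]
  have hmono : good.card ≤ (Finset.univ.filter (fun S : Finset (Fin n) => S.card = k ∧
      ∀ a : ℝ, ∀ ℓ ∈ Set.Icc (0 : ℝ) (2 * π),
        |(|VArcS n x S a ℓ| - (k : ℝ) / n * |VArcS n x Finset.univ a ℓ|)|
          ≤ 6 * Real.sqrt ((n:ℝ) * Real.log n))).card := by
    apply Finset.card_le_card
    rw [← hT]
    exact hgoodsub
  have hC0 : (0:ℝ) ≤ (n.choose k : ℝ) := Nat.cast_nonneg _
  have hgoodR : (n.choose k : ℝ) - (n.choose k : ℝ) / (2 * (n:ℝ)^3) ≤ (good.card : ℝ) := by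
    have : (n.choose k : ℝ) ≤ (good.card : ℝ) + (bad.card : ℝ) := by exact_mod_cast hcount
    linarith
  have hfinal : (1 - 1 / (n : ℝ) ^ 3) * (n.choose k)
      ≤ (n.choose k : ℝ) - (n.choose k : ℝ) / (2 * (n:ℝ)^3) := by
    have hn3 : (0:ℝ) < (n:ℝ)^3 := by positivity
    rw [sub_mul, one_mul]
    have hhalf : (n.choose k : ℝ) / (2 * (n:ℝ)^3) ≤ (n.choose k : ℝ) / ((n:ℝ)^3) := by
      gcongr
      linarith
    have he : 1 / (n:ℝ)^3 * (n.choose k : ℝ) = (n.choose k : ℝ) / ((n:ℝ)^3) := by ring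
    linarith
  have hml : ((Finset.univ.filter (fun S : Finset (Fin n) => S.card = k ∧
      ∀ a : ℝ, ∀ ℓ ∈ Set.Icc (0 : ℝ) (2 * π),
        |(|VArcS n x S a ℓ| - (k : ℝ) / n * |VArcS n x Finset.univ a ℓ|)|
          ≤ 6 * Real.sqrt ((n:ℝ) * Real.log n))).card : ℝ) ≥ (good.card : ℝ) := by
    exact_mod_cast hmono
  linarith
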